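/- arXiv:1602.08234 — 4 statements merged into one kernel-verified Lean document; each statement's English description precedes it below -/
import Mathlib

section
/- For a fixed W in GL_S(F_p) and N > S, the number of matrices X in GL_N(F_p) whose upper-left S×S corner equals W is exactly p^{S(N−S)} · ∏_{j=0}^{N−S−1} (p^N − p^{S+j}). -/
open Matrix

/-- The block decomposition equivalence: units of the block matrix ring with fixed
invertible upper-left corner `W` correspond to triples `(B, C, D')`. -/
noncomputable def blockCornerEquiv {R : Type*} [CommRing R] {S M : ℕ}
    (W : Matrix (Fin S) (Fin S) R) [Invertible W] :
    {Y : (Matrix (Fin S ⊕ Fin M) (Fin S ⊕ Fin M) R)ˣ //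
        Matrix.toBlocks₁₁ (Y : Matrix (Fin S ⊕ Fin M) (Fin S ⊕ Fin M) R) = W} ≃
      Matrix (Fin S) (Fin M) R × Matrix (Fin M) (Fin S) R ×
        (Matrix (Fin M) (Fin M) R)ˣ where
  toFun Y := ⟨Matrix.toBlocks₁₂ (Y.1 : Matrix (Fin S ⊕ Fin M) (Fin S ⊕ Fin M) R),
    Matrix.toBlocks₂₁ (Y.1 : Matrix (Fin S ⊕ Fin M) (Fin S ⊕ Fin M) R),
    (by
      have hY : IsUnit ((Y.1 : Matrix (Fin S ⊕ Fin M) (Fin S ⊕ Fin M) R)) := Y.1.isUnit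
      rw [← Matrix.fromBlocks_toBlocks ((Y.1 : Matrix (Fin S ⊕ Fin M) (Fin S ⊕ Fin M) R)),
        Y.2] at hY
      exact (Matrix.isUnit_fromBlocks_iff_of_invertible₁₁.mp hY).unit)⟩
  invFun x := ⟨(show IsUnit (Matrix.fromBlocks W x.1 x.2.1
      ((x.2.2 : Matrix (Fin M) (Fin M) R) + x.2.1 * ⅟W * x.1)) by
      rw [Matrix.isUnit_fromBlocks_iff_of_invertible₁₁, add_sub_cancel_right]
      exact x.2.2.isUnit).unit, by
      rw [IsUnit.unit_spec, Matrix.toBlocks_fromBlocks₁₁]⟩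
  left_inv := by
    rintro ⟨Y, hY⟩
    ext1
    apply Units.ext
    dsimp only
    rw [IsUnit.unit_spec, IsUnit.unit_spec, sub_add_cancel, ← hY,
      Matrix.fromBlocks_toBlocks]
  right_inv := by
    rintro ⟨B, C, D⟩
    dsimp only
    refine Prod.ext ?_ (Prod.ext ?_ ?_)
    · simp only [IsUnit.unit_spec, Matrix.toBlocks_fromBlocks₁₂]
    · simp only [IsUnit.unit_spec, Matrix.toBlocks_fromBlocks₂₁]
    · apply Units.ext
      simp only [IsUnit.unit_spec, Matrix.toBlocks_fromBlocks₂₂, Matrix.toBlocks_fromBlocks₂₁,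
        Matrix.toBlocks_fromBlocks₁₂]
      rw [add_sub_cancel_right]

theorem stmt_2 (p : ℕ) (hp : p.Prime) (S N : ℕ) (hS : 1 ≤ S) (hSN : S < N)
    (W : Matrix (Fin S) (Fin S) (ZMod p)) (hW : IsUnit W) :
    Nat.card {X : GL (Fin N) (ZMod p) //
        (fun i j : Fin S => (X : Matrix (Fin N) (Fin N) (ZMod p))
          (Fin.castLE hSN.le i) (Fin.castLE hSN.le j)) = W} =
      p ^ (S * (N - S)) * ∏ j ∈ Finset.range (N - S), (p ^ N - p ^ (S + j)) := by
  haveI : Fact p.Prime := ⟨hp⟩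
  haveI := hW.invertible
  set M := N - S with hM
  have hSM : S + M = N := by omega
  -- reindexing equivalence
  let e : Fin S ⊕ Fin M ≃ Fin N := finSumFinEquiv.trans (finCongr hSM)
  have he : ∀ i : Fin S, e (Sum.inl i) = Fin.castLE hSN.le i := fun i => by
    apply Fin.ext
    simp [e, finSumFinEquiv]
  let φ : (Matrix (Fin S ⊕ Fin M) (Fin S ⊕ Fin M) (ZMod p))ˣ ≃* GL (Fin N) (ZMod p) :=
    Units.mapEquiv (Matrix.reindexAlgEquiv (ZMod p) (ZMod p) e).toMulEquiv
  have key : ∀ Y : (Matrix (Fin S ⊕ Fin M) (Fin S ⊕ Fin M) (ZMod p))ˣ,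
      Matrix.toBlocks₁₁ (Y : Matrix (Fin S ⊕ Fin M) (Fin S ⊕ Fin M) (ZMod p)) = W ↔
        ((fun i j : Fin S => ((φ Y : GL (Fin N) (ZMod p)) : Matrix (Fin N) (Fin N) (ZMod p))
          (Fin.castLE hSN.le i) (Fin.castLE hSN.le j)) = W) := by
    intro Y
    have hent : ∀ i j : Fin S, ((φ Y : GL (Fin N) (ZMod p)) : Matrix (Fin N) (Fin N) (ZMod p))
        (Fin.castLE hSN.le i) (Fin.castLE hSN.le j) =
        (Y : Matrix (Fin S ⊕ Fin M) (Fin S ⊕ Fin M) (ZMod p)) (Sum.inl i) (Sum.inl j) := by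
      intro i j
      rw [← he i, ← he j]
      simp [φ, Matrix.reindexAlgEquiv, Matrix.reindex_apply, Matrix.submatrix_apply]
    constructor
    · intro h
      funext i j
      rw [hent i j]
      exact congrFun (congrFun h i) j
    · intro h
      ext i j
      show (Y : Matrix (Fin S ⊕ Fin M) (Fin S ⊕ Fin M) (ZMod p)) (Sum.inl i) (Sum.inl j) = W i j
      rw [← hent i j]
      exact congrFun (congrFun h i) j
  -- the chain of equivalences
  have card_eq : Nat.card {X : GL (Fin N) (ZMod p) //
      (fun i j : Fin S => (X : Matrix (Fin N) (Fin N) (ZMod p))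
        (Fin.castLE hSN.le i) (Fin.castLE hSN.le j)) = W} =
      Nat.card (Matrix (Fin S) (Fin M) (ZMod p) × Matrix (Fin M) (Fin S) (ZMod p) ×
        (Matrix (Fin M) (Fin M) (ZMod p))ˣ) := by
    refine Nat.card_congr (Equiv.trans ?_ (blockCornerEquiv (M := M) W))
    exact (φ.toEquiv.subtypeEquiv key).symm
  rw [card_eq]
  have cm : ∀ a b : ℕ, Nat.card (Matrix (Fin a) (Fin b) (ZMod p)) = p ^ (a * b) := by
    intro a b
    rw [Nat.card_eq_fintype_card]
    rw [show Fintype.card (Matrix (Fin a) (Fin b) (ZMod p)) =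
        Fintype.card (Fin a → Fin b → (ZMod p)) from rfl]
    simp only [Fintype.card_fun, Fintype.card_fin, ZMod.card]
    rw [← pow_mul, mul_comm]
  have cgl : Nat.card (GL (Fin M) (ZMod p)) = ∏ i : Fin M, (p ^ M - p ^ (i : ℕ)) := by
    have := Matrix.card_GL_field (𝔽 := ZMod p) (n := M)
    simpa [ZMod.card] using this
  rw [Nat.card_prod, Nat.card_prod, cm, cm, cgl]
  have hfac : ∀ j, j ∈ Finset.range M → p ^ N - p ^ (S + j) = p ^ S * (p ^ M - p ^ j) := by
    intro j _
    rw [Nat.mul_sub_left_distrib, ← pow_add, ← pow_add, hSM]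
  rw [Finset.prod_congr rfl hfac, Finset.prod_mul_distrib, Finset.prod_const,
    Finset.card_range, ← pow_mul, Fin.prod_univ_eq_prod_range (fun i => p ^ M - p ^ i)]
  ring
end

section
/- For any matrix W in M_S(F_p) and any N > S, the number of matrices X in GL_N(F_p) whose upper-left S×S corner equals W is at least ∏_{i=0}^{S−1} (p^{N−S} − p^i) · ∏_{j=0}^{N−S−1} (p^N − p^{S+j}). -/
open Submodule Set

attribute [local instance] Fintype.ofFinite

lemma aux_card_span {K V : Type*} [Field K] [AddCommGroup V] [Module K V] [Fintype K] [Finite V]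
    {m : ℕ} (t : Fin m → V) :
    Nat.card (Submodule.span K (Set.range t)) ≤ Fintype.card K ^ m := by
  have hsurj : Function.Surjective
      (fun c : Fin m → K => (⟨∑ j, c j • t j,
        Submodule.sum_smul_mem _ _ (fun j _ => Submodule.subset_span (Set.mem_range_self j))⟩ :
        Submodule.span K (Set.range t))) := by
    rintro ⟨x, hx⟩
    obtain ⟨c, hc⟩ := (mem_span_range_iff_exists_fun K).mp hx
    exact ⟨c, Subtype.ext hc⟩
  calc Nat.card (Submodule.span K (Set.range t))
      ≤ Nat.card (Fin m → K) := Nat.card_le_card_of_surjective _ hsurj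
    _ = Fintype.card K ^ m := by simp [Nat.card_eq_fintype_card]

lemma aux_card_diff {V : Type*} [Finite V] (A B : Set V) :
    Nat.card A - Nat.card B ≤ Nat.card {v : V // v ∈ A ∧ v ∉ B} := by
  have h1 : Nat.card {v : V // v ∈ A ∧ v ∉ B} = (A \ B).ncard := by
    rw [← Nat.card_coe_set_eq]
    exact Nat.card_congr (Equiv.subtypeEquivRight fun v => (Set.mem_diff v).symm)
  rw [h1, Nat.card_coe_set_eq, Nat.card_coe_set_eq]
  exact Set.le_ncard_diff B A (Set.toFinite B)

lemma aux_seq_count {K V : Type*} [Field K] [AddCommGroup V] [Module K V] [Fintype K] [Finite V] :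
    ∀ (k : ℕ) (C : Fin k → Set V) (c : Fin k → ℕ),
    (∀ (i : Fin k) (t : Fin i.val → V),
      c i ≤ Nat.card {v : V // v ∈ C i ∧ v ∉ Submodule.span K (Set.range t)}) →
    ∏ i, c i ≤ Nat.card {s : Fin k → V // LinearIndependent K s ∧ ∀ i, s i ∈ C i} := by
  intro k
  induction k with
  | zero =>
    intro C c _
    have : Nonempty {s : Fin 0 → V // LinearIndependent K s ∧ ∀ i, s i ∈ C i} :=
      ⟨⟨Fin.elim0, linearIndependent_empty_type, fun i => i.elim0⟩⟩
    simpa using Nat.one_le_iff_ne_zero.mpr (Nat.card_ne_zero.mpr ⟨this, Finite.of_injective _ Subtype.val_injective⟩)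
  | succ k ih =>
    intro C c hc
    set T := {t : Fin k → V // LinearIndependent K t ∧ ∀ i, t i ∈ C i.castSucc} with hT
    have e : (Σ t : T, {v : V // v ∈ C (Fin.last k) ∧ v ∉ Submodule.span K (Set.range t.1)}) ≃
        {s : Fin (k+1) → V // LinearIndependent K s ∧ ∀ i, s i ∈ C i} := by
      apply Equiv.ofBijective
        (fun tv => (⟨Fin.snoc tv.1.1 tv.2.1, by
            rw [linearIndependent_fin_snoc]; exact ⟨tv.1.2.1, tv.2.2.2⟩, by
          intro i
          refine Fin.lastCases ?_ (fun j => ?_) i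
          · simpa using tv.2.2.1
          · simpa using tv.1.2.2 j⟩ :
          {s : Fin (k+1) → V // LinearIndependent K s ∧ ∀ i, s i ∈ C i}))
      constructor
      · rintro ⟨⟨t, ht⟩, ⟨v, hv⟩⟩ ⟨⟨t', ht'⟩, ⟨v', hv'⟩⟩ h
        have h' : Fin.snoc t v = (Fin.snoc t' v' : Fin (k+1) → V) := congrArg Subtype.val h
        have h1 : t = t' := by
          funext j
          have := congrFun h' j.castSucc
          simpa using this
        have h2 : v = v' := by
          have := congrFun h' (Fin.last k)
          simpa using this
        subst h1; subst h2; rfl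
      · rintro ⟨s, hs1, hs2⟩
        have hli := hs1
        rw [← Fin.snoc_init_self s, linearIndependent_fin_snoc] at hli
        refine ⟨⟨⟨Fin.init s, hli.1, fun i => by simpa [Fin.init] using hs2 i.castSucc⟩,
          ⟨s (Fin.last k), hs2 _, hli.2⟩⟩, ?_⟩
        exact Subtype.ext (Fin.snoc_init_self s)
    rw [← Nat.card_congr e]
    have hfin : ∀ t : T, Finite {v : V // v ∈ C (Fin.last k) ∧ v ∉ Submodule.span K (Set.range t.1)} :=
      fun t => Finite.of_injective _ Subtype.val_injective
    rw [Nat.card_eq_fintype_card, Fintype.card_sigma]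
    simp only [← Nat.card_eq_fintype_card]
    calc ∏ i : Fin (k+1), c i = (∏ i : Fin k, c i.castSucc) * c (Fin.last k) :=
          Fin.prod_univ_castSucc c
      _ ≤ Nat.card T * c (Fin.last k) := by
          apply Nat.mul_le_mul_right
          exact ih (fun i => C i.castSucc) (fun i => c i.castSucc)
            (fun i t => hc i.castSucc t)
      _ = ∑ t : T, c (Fin.last k) := by
          rw [Finset.sum_const, Nat.card_eq_fintype_card, Finset.card_univ, smul_eq_mul]
      _ ≤ ∑ t : T, Nat.card {v : V // v ∈ C (Fin.last k) ∧ v ∉ Submodule.span K (Set.range t.1)} :=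
          Finset.sum_le_sum (fun t _ => hc (Fin.last k) t.1)

lemma aux_card_slice {K : Type*} [Fintype K] {S N : ℕ} (hSN : S ≤ N) (w : Fin S → K) :
    Nat.card {v : Fin N → K // ∀ j : Fin S, v (Fin.castLE hSN j) = w j} =
      Fintype.card K ^ (N - S) := by
  have e : {v : Fin N → K // ∀ j : Fin S, v (Fin.castLE hSN j) = w j} ≃ (Fin (N - S) → K) := by
    refine ⟨fun v j => v.1 ⟨S + j.val, by omega⟩,
      fun g => ⟨fun i => if h : i.val < S then w ⟨i.val, h⟩ else g ⟨i.val - S, by omega⟩,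
        fun j => by simp [j.isLt]⟩, fun v => ?_, fun g => ?_⟩
    · apply Subtype.ext
      funext i
      by_cases h : i.val < S
      · simpa [h] using (v.2 ⟨i.val, h⟩).symm
      · simp only [dif_neg h]
        exact congrArg v.1 (Fin.ext (show S + (i.val - S) = i.val by omega))
    · funext j
      simp only
      rw [dif_neg (by omega)]
      exact congrArg g (Fin.ext (show S + j.val - S = j.val by omega))
  rw [Nat.card_congr e]
  simp [Nat.card_eq_fintype_card]

theorem stmt_4 (p : ℕ) (hp : p.Prime) (S N : ℕ) (hS : 1 ≤ S) (hSN : S < N)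
    (W : Matrix (Fin S) (Fin S) (ZMod p)) :
    (∏ i ∈ Finset.range S, (p ^ (N - S) - p ^ i)) *
        ∏ j ∈ Finset.range (N - S), (p ^ N - p ^ (S + j)) ≤
      Nat.card {X : GL (Fin N) (ZMod p) //
        (fun i j : Fin S => (X : Matrix (Fin N) (Fin N) (ZMod p))
          (Fin.castLE hSN.le i) (Fin.castLE hSN.le j)) = W} := by
  haveI : Fact p.Prime := ⟨hp⟩
  have hq : Fintype.card (ZMod p) = p := ZMod.card p
  set C : Fin N → Set (Fin N → ZMod p) := fun i =>
    if h : i.val < S then {v | ∀ j : Fin S, v (Fin.castLE hSN.le j) = W j ⟨i.val, h⟩}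
    else Set.univ with hC
  set f : ℕ → ℕ := fun n => if n < S then p ^ (N - S) - p ^ n else p ^ N - p ^ n with hf
  have key : Nat.card {X : GL (Fin N) (ZMod p) //
      (fun i j : Fin S => (X : Matrix (Fin N) (Fin N) (ZMod p))
        (Fin.castLE hSN.le i) (Fin.castLE hSN.le j)) = W} =
      Nat.card {s : Fin N → Fin N → ZMod p // LinearIndependent (ZMod p) s ∧ ∀ i, s i ∈ C i} := by
    apply Nat.card_congr
    refine ((Matrix.equiv_GL_linearindependent (𝔽 := ZMod p) N).subtypeEquiv
      (fun X => ?_)).trans (Equiv.subtypeSubtypeEquivSubtypeInter _ _)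
    constructor
    · intro hX i
      simp only [hC]
      split_ifs with h
      · intro j
        have h2 := congrFun (congrFun hX j) ⟨i.val, h⟩
        have hcast : Fin.castLE hSN.le ⟨i.val, h⟩ = i := Fin.ext rfl
        rw [hcast] at h2
        simpa [Matrix.equiv_GL_linearindependent] using h2
      · trivial
    · intro h
      funext i j
      have hj : (Fin.castLE hSN.le j).val < S := j.isLt
      have h3 := h (Fin.castLE hSN.le j)
      simp only [hC, dif_pos hj] at h3
      have h4 := h3 i
      have hcast : (⟨(Fin.castLE hSN.le j).val, hj⟩ : Fin S) = j := Fin.ext rfl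
      rw [hcast] at h4
      simpa [Matrix.equiv_GL_linearindependent] using h4
  have hsplit : ∏ i ∈ Finset.range N, f i =
      (∏ i ∈ Finset.range S, (p ^ (N - S) - p ^ i)) *
        ∏ j ∈ Finset.range (N - S), (p ^ N - p ^ (S + j)) := by
    have h1 : Finset.range N = Finset.range (S + (N - S)) := by rw [Nat.add_sub_cancel' hSN.le]
    rw [h1, Finset.prod_range_add]
    congr 1
    · refine Finset.prod_congr rfl (fun i hi => ?_)
      simp only [hf]
      exact if_pos (Finset.mem_range.mp hi)
    · refine Finset.prod_congr rfl (fun j _ => ?_)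
      simp only [hf]
      exact if_neg (Nat.not_lt.mpr (Nat.le_add_right S j))
  have main := aux_seq_count (K := ZMod p) (V := Fin N → ZMod p) N C (fun i => f i.val) ?_
  · rw [key, ← hsplit, ← Fin.prod_univ_eq_prod_range]
    exact main
  · intro i t
    by_cases h : i.val < S
    · have hCi : C i = {v | ∀ j : Fin S, v (Fin.castLE hSN.le j) = W j ⟨i.val, h⟩} := by
        simp only [hC]
        rw [dif_pos h]
      have hcard : Nat.card (C i) = p ^ (N - S) := by
        have hs := aux_card_slice (K := ZMod p) hSN.le (fun j => W j ⟨i.val, h⟩)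
        rw [hq] at hs
        rw [hCi]
        exact hs
      calc (fun i : Fin N => f i.val) i = p ^ (N - S) - p ^ i.val := if_pos h
        _ ≤ Nat.card (C i) - Nat.card (Submodule.span (ZMod p) (Set.range t)) := by
            apply tsub_le_tsub
            · exact le_of_eq hcard.symm
            · calc Nat.card (Submodule.span (ZMod p) (Set.range t))
                  ≤ Fintype.card (ZMod p) ^ i.val := aux_card_span t
                _ = p ^ i.val := by rw [hq]
        _ ≤ _ := aux_card_diff (C i) (Submodule.span (ZMod p) (Set.range t))
    · have hCi : C i = Set.univ := by
        simp only [hC]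
        rw [dif_neg h]
      have hcard : Nat.card (C i) = p ^ N := by
        rw [hCi, Nat.card_congr (Equiv.Set.univ _), Nat.card_eq_fintype_card]
        simp [hq]
      calc (fun i : Fin N => f i.val) i = p ^ N - p ^ i.val := if_neg h
        _ ≤ Nat.card (C i) - Nat.card (Submodule.span (ZMod p) (Set.range t)) := by
            apply tsub_le_tsub
            · exact le_of_eq hcard.symm
            · calc Nat.card (Submodule.span (ZMod p) (Set.range t))
                  ≤ Fintype.card (ZMod p) ^ i.val := aux_card_span t
                _ = p ^ i.val := by rw [hq]
        _ ≤ _ := aux_card_diff (C i) (Submodule.span (ZMod p) (Set.range t))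
end

section
/- If X is sampled uniformly from GL_N(F_q), then for every W in M_S(F_q), the probability P(X[S] = W) converges to q^{−S²} as N → ∞; i.e., the law of the truncated corner X[S] converges to the uniform distribution on M_S(F_q). -/
open Filter

section aux

variable {F : Type} [Field F] [Fintype F] [DecidableEq F]

attribute [local instance] Fintype.ofFinite

local notation "q" => Fintype.card F

lemma fiber_card {N S : ℕ} (m : ℕ) (r : Fin S → (Fin N → F)) (hr : LinearIndependent F r) :
    Nat.card {t : Fin m → (Fin N → F) // LinearIndependent F (Fin.append r t)} =
      ∏ j : Fin m, (q ^ N - q ^ (S + (j : ℕ))) := by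
  induction m with
  | zero =>
    have hall : ∀ t : Fin 0 → (Fin N → F), LinearIndependent F (Fin.append r t) := by
      intro t
      rw [Subsingleton.elim t Fin.elim0, Fin.append_elim0]
      exact hr
    haveI : Unique {t : Fin 0 → (Fin N → F) // LinearIndependent F (Fin.append r t)} :=
      ⟨⟨⟨Fin.elim0, hall _⟩⟩, fun t => Subtype.ext (Subsingleton.elim _ _)⟩
    simp [Nat.card_unique]
  | succ m ih =>
    have key : ∀ t : Fin (m + 1) → (Fin N → F),
        Fin.append r t = Fin.snoc (Fin.append r (Fin.init t)) (t (Fin.last m)) := by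
      intro t
      conv_lhs => rw [← Fin.snoc_init_self t]
      rw [Fin.append_snoc]
    have e : {t : Fin (m + 1) → (Fin N → F) // LinearIndependent F (Fin.append r t)} ≃
        Σ t : {t : Fin m → (Fin N → F) // LinearIndependent F (Fin.append r t)},
          ((Submodule.span F (Set.range (Fin.append r t.1)))ᶜ : Set (Fin N → F)) :=
      { toFun := fun t =>
          ⟨⟨Fin.init t.1, (linearIndependent_fin_snoc.mp (key t.1 ▸ t.2)).1⟩,
            ⟨t.1 (Fin.last m), (linearIndependent_fin_snoc.mp (key t.1 ▸ t.2)).2⟩⟩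
        invFun := fun s =>
          ⟨Fin.snoc s.1.1 s.2.1, by
            rw [Fin.append_snoc]
            exact linearIndependent_fin_snoc.mpr ⟨s.1.2, s.2.2⟩⟩
        left_inv := fun t => Subtype.ext (Fin.snoc_init_self t.1)
        right_inv := fun s => by
          refine Sigma.ext (Subtype.ext ?_) ?_
          · simp
          · refine (Subtype.heq_iff_coe_eq ?_).mpr ?_
            · intro x
              simp
            · simp }
    rw [Nat.card_eq_fintype_card, Fintype.card_congr e, Fintype.card_sigma]
    have hc : ∀ t : {t : Fin m → (Fin N → F) // LinearIndependent F (Fin.append r t)},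
        Fintype.card ((Submodule.span F (Set.range (Fin.append r t.1)))ᶜ : Set (Fin N → F)) =
          q ^ N - q ^ (S + m) := by
      intro t
      rw [Fintype.card_compl_set, Module.card_eq_pow_finrank (K := F)
        (V := ((Submodule.span F (Set.range (Fin.append r t.1))) : Set (Fin N → F)))]
      simp only [SetLike.coe_sort_coe, finrank_span_eq_card t.2, Fintype.card_fin]
      rw [Module.card_eq_pow_finrank (K := F) (V := Fin N → F)]
      simp [Module.finrank_fintype_fun_eq_card]
    rw [Finset.sum_congr rfl fun t _ => hc t, Finset.sum_const, Finset.card_univ,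
      ← Nat.card_eq_fintype_card, ih, smul_eq_mul, Fin.prod_univ_castSucc]
    simp


lemma card_corner (S n : ℕ) (W : Matrix (Fin S) (Fin S) F) :
    Nat.card {M : Matrix (Fin (S + n)) (Fin (S + n)) F // IsUnit M ∧
        (fun i j : Fin S => M (Fin.castAdd n i) (Fin.castAdd n j)) = W} =
      Nat.card {r : Fin S → (Fin (S + n) → F) // LinearIndependent F r ∧
        (fun i j : Fin S => r i (Fin.castAdd n j)) = W} *
      ∏ j : Fin n, (q ^ (S + n) - q ^ (S + (j : ℕ))) := by
  have e : {M : Matrix (Fin (S + n)) (Fin (S + n)) F // IsUnit M ∧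
        (fun i j : Fin S => M (Fin.castAdd n i) (Fin.castAdd n j)) = W} ≃
      Σ r : {r : Fin S → (Fin (S + n) → F) // LinearIndependent F r ∧
          (fun i j : Fin S => r i (Fin.castAdd n j)) = W},
        {t : Fin n → (Fin (S + n) → F) // LinearIndependent F (Fin.append r.1 t)} :=
    { toFun := fun M => by
        have hLI : LinearIndependent F (fun i => M.1 i) :=
          Matrix.linearIndependent_rows_iff_isUnit.mpr M.2.1
        refine ⟨⟨fun i => M.1 (Fin.castAdd n i), ?_, M.2.2⟩,
          ⟨fun j => M.1 (Fin.natAdd S j), ?_⟩⟩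
        · exact hLI.comp (Fin.castAdd n) (Fin.castAdd_injective _ _)
        · convert hLI using 1
          exact Fin.append_castAdd_natAdd (f := M.1)
      invFun := fun s =>
        ⟨Matrix.of (Fin.append s.1.1 s.2.1), by
          constructor
          · exact Matrix.linearIndependent_rows_iff_isUnit.mp s.2.2
          · funext i j
            show Fin.append s.1.1 s.2.1 (Fin.castAdd n i) (Fin.castAdd n j) = W i j
            rw [Fin.append_left]
            exact congrFun (congrFun s.1.2.2 i) j⟩
      left_inv := fun M => Subtype.ext (by exact Fin.append_castAdd_natAdd (f := M.1))
      right_inv := fun s => by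
        have h1 : (fun i => Fin.append s.1.1 s.2.1 (Fin.castAdd n i)) = s.1.1 :=
          funext fun i => Fin.append_left _ _ i
        refine Sigma.ext (Subtype.ext ?_) ?_
        · exact h1
        · refine (Subtype.heq_iff_coe_eq ?_).mpr ?_
          · intro x
            show LinearIndependent F
                (Fin.append (fun i => Fin.append (s.1.1) (s.2.1) (Fin.castAdd n i)) x) ↔
              LinearIndependent F (Fin.append (s.1.1) x)
            rw [h1]
          · exact funext fun j => Fin.append_right _ _ j }
  rw [Nat.card_congr e, Nat.card_eq_fintype_card, Fintype.card_sigma]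
  have hc : ∀ r : {r : Fin S → (Fin (S + n) → F) // LinearIndependent F r ∧
      (fun i j : Fin S => r i (Fin.castAdd n j)) = W},
      Fintype.card {t : Fin n → (Fin (S + n) → F) // LinearIndependent F (Fin.append r.1 t)} =
        ∏ j : Fin n, (q ^ (S + n) - q ^ (S + (j : ℕ))) := by
    intro r
    rw [← Nat.card_eq_fintype_card, fiber_card n r.1 r.2.1]
  rw [Finset.sum_congr rfl fun r _ => hc r, Finset.sum_const, Finset.card_univ,
    smul_eq_mul, Nat.card_eq_fintype_card]


lemma card_GL_corner (S n : ℕ) (W : Matrix (Fin S) (Fin S) F) :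
    Nat.card {X : GL (Fin (S + n)) F //
        (fun i j : Fin S => (X : Matrix (Fin (S + n)) (Fin (S + n)) F)
          (Fin.castAdd n i) (Fin.castAdd n j)) = W} =
      Nat.card {M : Matrix (Fin (S + n)) (Fin (S + n)) F // IsUnit M ∧
        (fun i j : Fin S => M (Fin.castAdd n i) (Fin.castAdd n j)) = W} := by
  refine Nat.card_congr ⟨fun X => ⟨(X.1 : Matrix _ _ F), X.1.isUnit, X.2⟩,
    fun M => ⟨M.2.1.unit, ?_⟩,
    fun X => Subtype.ext (by exact Units.ext X.1.isUnit.unit_spec),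
    fun M => Subtype.ext (by exact M.2.1.unit_spec)⟩
  have : ((M.2.1.unit : (Matrix (Fin (S + n)) (Fin (S + n)) F)ˣ) :
      Matrix (Fin (S + n)) (Fin (S + n)) F) = M.1 := IsUnit.unit_spec _
  rw [this]
  exact M.2.2

lemma A_le (S n : ℕ) (W : Matrix (Fin S) (Fin S) F) :
    Nat.card {r : Fin S → (Fin (S + n) → F) // LinearIndependent F r ∧
        (fun i j : Fin S => r i (Fin.castAdd n j)) = W} ≤ (q ^ n) ^ S := by
  have hdec : ∀ (r : Fin S → (Fin (S + n) → F))
      (hr : (fun i j : Fin S => r i (Fin.castAdd n j)) = W) (i : Fin S),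
      r i = Fin.append (W i) (fun j => r i (Fin.natAdd S j)) := by
    intro r hr i
    conv_lhs => rw [← Fin.append_castAdd_natAdd (f := r i)]
    rw [show (fun j => r i (Fin.castAdd n j)) = W i from congrFun hr i]
  have key : Nat.card {r : Fin S → (Fin (S + n) → F) // LinearIndependent F r ∧
      (fun i j : Fin S => r i (Fin.castAdd n j)) = W} ≤
        Nat.card (Fin S → Fin n → F) := by
    apply Nat.card_le_card_of_injective
      (fun r => (fun i j => r.1 i (Fin.natAdd S j) : Fin S → Fin n → F))
    intro r r' h
    apply Subtype.ext
    funext i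
    rw [hdec r.1 r.2.2 i, hdec r'.1 r'.2.2 i, show (fun j => r.1 i (Fin.natAdd S j)) =
      (fun j => r'.1 i (Fin.natAdd S j)) from congrFun h i]
  calc Nat.card {r : Fin S → (Fin (S + n) → F) // LinearIndependent F r ∧
      (fun i j : Fin S => r i (Fin.castAdd n j)) = W} ≤ Nat.card (Fin S → Fin n → F) := key
    _ = (q ^ n) ^ S := by
        simp [Nat.card_eq_fintype_card, Fintype.card_fun]

lemma A_ge (S n : ℕ) (hn : S ≤ n) (W : Matrix (Fin S) (Fin S) F) :
    ∏ j : Fin S, (q ^ n - q ^ (j : ℕ)) ≤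
      Nat.card {r : Fin S → (Fin (S + n) → F) // LinearIndependent F r ∧
        (fun i j : Fin S => r i (Fin.castAdd n j)) = W} := by
  have hfr : Module.finrank F (Fin n → F) = n := by
    simp [Module.finrank_fintype_fun_eq_card]
  have hcard := card_linearIndependent (K := F) (V := Fin n → F) (k := S) (by rw [hfr]; exact hn)
  rw [hfr] at hcard
  rw [← hcard]
  apply Nat.card_le_card_of_injective
    (fun b => (⟨fun i => Fin.append (W i) (b.1 i), by
      apply LinearIndependent.of_comp (LinearMap.funLeft F F (Fin.natAdd S))
      have : (⇑(LinearMap.funLeft F F (Fin.natAdd S)) ∘ fun i => Fin.append (W i) (b.1 i))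
          = b.1 := funext fun i => funext fun j => Fin.append_right _ _ j
      rw [this]
      exact b.2, by
      funext i j
      exact Fin.append_left _ _ j⟩ :
      {r : Fin S → (Fin (S + n) → F) // LinearIndependent F r ∧
        (fun i j : Fin S => r i (Fin.castAdd n j)) = W}))
  intro b b' h
  apply Subtype.ext
  funext i j
  have h2 := congrFun (congrFun (congrArg Subtype.val h) i) (Fin.natAdd S j)
  simpa [Fin.append_right] using h2

lemma card_GL_split (S n : ℕ) :
    Nat.card (GL (Fin (S + n)) F) =
      (∏ t : Fin S, (q ^ (S + n) - q ^ (t : ℕ))) *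
        ∏ j : Fin n, (q ^ (S + n) - q ^ (S + (j : ℕ))) := by
  rw [Matrix.card_GL_field, Fin.prod_univ_add]
  simp

end aux

lemma factor_tendsto {Q a b : ℝ} (S : ℕ) (hQ : 1 < Q) (hb : b < Q ^ S) :
    Filter.Tendsto (fun n : ℕ => (Q ^ n - a) / (Q ^ (S + n) - b)) Filter.atTop
      (nhds ((Q ^ S)⁻¹)) := by
  have hQ0 : (0:ℝ) < Q := lt_trans one_pos hQ
  have hE : Filter.Tendsto (fun n : ℕ => (Q⁻¹) ^ n) Filter.atTop (nhds 0) :=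
    tendsto_pow_atTop_nhds_zero_of_lt_one (by positivity) (inv_lt_one_of_one_lt₀ hQ)
  have h1 : Filter.Tendsto (fun n : ℕ => 1 - a * Q⁻¹ ^ n) Filter.atTop (nhds 1) := by
    simpa using tendsto_const_nhds.sub (hE.const_mul a)
  have h2 : Filter.Tendsto (fun n : ℕ => Q ^ S - b * Q⁻¹ ^ n) Filter.atTop (nhds (Q ^ S)) := by
    simpa using tendsto_const_nhds.sub (hE.const_mul b)
  have hQS : (Q:ℝ) ^ S ≠ 0 := by positivity
  have hmain := h1.div h2 hQS
  rw [one_div] at hmain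
  refine hmain.congr fun n => ?_
  have hQn : (0:ℝ) < Q ^ n := pow_pos hQ0 n
  have hden : (0:ℝ) < Q ^ (S + n) - b := by
    have : Q ^ S ≤ Q ^ (S + n) := pow_le_pow_right₀ hQ.le (Nat.le_add_right S n)
    linarith
  have h3 : Q ^ S - b * Q⁻¹ ^ n = (Q ^ (S + n) - b) / Q ^ n := by
    rw [pow_add, inv_pow]
    field_simp
  have h4 : 1 - a * Q⁻¹ ^ n = (Q ^ n - a) / Q ^ n := by
    rw [inv_pow]
    field_simp
  show (1 - a * Q⁻¹ ^ n) / (Q ^ S - b * Q⁻¹ ^ n) = _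
  rw [h3, h4, div_div_div_cancel_right₀]
  exact hQn.ne'

theorem stmt_6 (q : ℕ) (F : Type) [Field F] [Fintype F] [DecidableEq F]
    (hq : Fintype.card F = q) (S : ℕ) (hS : 1 ≤ S)
    (W : Matrix (Fin S) (Fin S) F) :
    Tendsto (fun n : ℕ =>
        (Nat.card {X : GL (Fin (S + n)) F //
            (fun i j : Fin S => (X : Matrix (Fin (S + n)) (Fin (S + n)) F)
              (Fin.castLE (Nat.le_add_right S n) i)
              (Fin.castLE (Nat.le_add_right S n) j)) = W} : ℝ) /
          (Nat.card (GL (Fin (S + n)) F) : ℝ))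
      atTop (nhds (((q : ℝ) ^ (S ^ 2))⁻¹)) := by
  subst hq
  set q : ℕ := Fintype.card F with hqdef
  have hq2 : 1 < q := Fintype.one_lt_card
  have hQ : (1:ℝ) < (q:ℝ) := by exact_mod_cast hq2
  have hq0 : (0:ℝ) < (q:ℝ) := by positivity
  -- the natural-number counts
  set A : ℕ → ℕ := fun n => Nat.card {r : Fin S → (Fin (S + n) → F) //
    LinearIndependent F r ∧ (fun i j : Fin S => r i (Fin.castAdd n j)) = W} with hAdef
  set P : ℕ → ℕ := fun n => ∏ t : Fin S, (q ^ (S + n) - q ^ (t : ℕ)) with hPdef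
  have hPpos : ∀ n, 0 < P n := by
    intro n
    apply Finset.prod_pos
    intro t _
    exact Nat.sub_pos_of_lt (Nat.pow_lt_pow_right hq2 (by omega))
  have hCpos : ∀ n, 0 < ∏ j : Fin n, (q ^ (S + n) - q ^ (S + (j : ℕ))) := by
    intro n
    apply Finset.prod_pos
    intro j _
    exact Nat.sub_pos_of_lt (Nat.pow_lt_pow_right hq2 (by omega))
  have hform : ∀ n : ℕ,
      (Nat.card {X : GL (Fin (S + n)) F //
            (fun i j : Fin S => (X : Matrix (Fin (S + n)) (Fin (S + n)) F)
              (Fin.castLE (Nat.le_add_right S n) i)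
              (Fin.castLE (Nat.le_add_right S n) j)) = W} : ℝ) /
          (Nat.card (GL (Fin (S + n)) F) : ℝ) = (A n : ℝ) / (P n : ℝ) := by
    intro n
    have h1 : Nat.card {X : GL (Fin (S + n)) F //
        (fun i j : Fin S => (X : Matrix (Fin (S + n)) (Fin (S + n)) F)
          (Fin.castLE (Nat.le_add_right S n) i)
          (Fin.castLE (Nat.le_add_right S n) j)) = W} =
        A n * ∏ j : Fin n, (q ^ (S + n) - q ^ (S + (j : ℕ))) := by
      exact (card_GL_corner S n W).trans (card_corner S n W)
    have h2 : Nat.card (GL (Fin (S + n)) F) =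
        P n * ∏ j : Fin n, (q ^ (S + n) - q ^ (S + (j : ℕ))) := card_GL_split S n
    rw [h1, h2, Nat.cast_mul, Nat.cast_mul, mul_div_mul_right]
    exact Nat.cast_ne_zero.mpr (hCpos n).ne'
  simp only [hform]
  -- real denominators
  have hPD : ∀ n, (P n : ℝ) = ∏ t : Fin S, ((q:ℝ) ^ (S + n) - (q:ℝ) ^ (t : ℕ)) := by
    intro n
    show ((∏ t : Fin S, (q ^ (S + n) - q ^ (t : ℕ)) : ℕ) : ℝ) = _
    rw [Nat.cast_prod]
    apply Finset.prod_congr rfl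
    intro t _
    rw [Nat.cast_sub (Nat.pow_le_pow_right hq2.le (by omega))]
    push_cast
    ring
  have hDpos : ∀ n, (0:ℝ) < ∏ t : Fin S, ((q:ℝ) ^ (S + n) - (q:ℝ) ^ (t : ℕ)) := by
    intro n
    rw [← hPD]
    exact_mod_cast hPpos n
  -- limits of the bounding sequences
  have hlimval : ∏ _t : Fin S, (((q:ℝ) ^ S)⁻¹) = ((q : ℝ) ^ (S ^ 2))⁻¹ := by
    rw [Finset.prod_const, Finset.card_univ, Fintype.card_fin, ← inv_pow, ← pow_mul, sq, inv_pow]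
  have hLlim : Tendsto (fun n : ℕ =>
      ∏ j : Fin S, (((q:ℝ) ^ n - (q:ℝ) ^ (j : ℕ)) / ((q:ℝ) ^ (S + n) - (q:ℝ) ^ (j : ℕ))))
      atTop (nhds (((q : ℝ) ^ (S ^ 2))⁻¹)) := by
    rw [← hlimval]
    exact tendsto_finset_prod _ fun j _ =>
      factor_tendsto S hQ (pow_lt_pow_right₀ hQ j.2)
  have hUlim : Tendsto (fun n : ℕ =>
      ∏ t : Fin S, ((q:ℝ) ^ n / ((q:ℝ) ^ (S + n) - (q:ℝ) ^ (t : ℕ))))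
      atTop (nhds (((q : ℝ) ^ (S ^ 2))⁻¹)) := by
    rw [← hlimval]
    refine tendsto_finset_prod _ fun t _ => ?_
    refine (factor_tendsto (a := 0) S hQ (pow_lt_pow_right₀ hQ t.2)).congr fun n => ?_
    rw [sub_zero]
  -- bounds
  have hlow : ∀ n, S ≤ n →
      ∏ j : Fin S, (((q:ℝ) ^ n - (q:ℝ) ^ (j : ℕ)) / ((q:ℝ) ^ (S + n) - (q:ℝ) ^ (j : ℕ))) ≤
        (A n : ℝ) / (P n : ℝ) := by
    intro n hn
    rw [Finset.prod_div_distrib, hPD]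
    have hnum : ∏ j : Fin S, ((q:ℝ) ^ n - (q:ℝ) ^ (j : ℕ)) =
        ((∏ j : Fin S, (q ^ n - q ^ (j : ℕ)) : ℕ) : ℝ) := by
      rw [Nat.cast_prod]
      apply Finset.prod_congr rfl
      intro j _
      rw [Nat.cast_sub (Nat.pow_le_pow_right hq2.le (by omega))]
      push_cast
      ring
    rw [hnum]
    gcongr
    · exact (hDpos n).le
    · exact_mod_cast A_ge S n hn W
  have hup : ∀ n, S ≤ n →
      (A n : ℝ) / (P n : ℝ) ≤
        ∏ t : Fin S, ((q:ℝ) ^ n / ((q:ℝ) ^ (S + n) - (q:ℝ) ^ (t : ℕ))) := by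
    intro n _
    rw [Finset.prod_div_distrib, hPD, Finset.prod_const, Finset.card_univ, Fintype.card_fin]
    gcongr
    · exact (hDpos n).le
    · calc (A n : ℝ) ≤ (((q ^ n) ^ S : ℕ) : ℝ) := by exact_mod_cast A_le S n W
        _ = ((q:ℝ) ^ n) ^ S := by push_cast; ring
  exact tendsto_of_tendsto_of_tendsto_of_le_of_le' hLlim hUlim
    (eventually_atTop.mpr ⟨S, hlow⟩) (eventually_atTop.mpr ⟨S, hup⟩)
end

section
/- If X is sampled uniformly from GL_N(Z/p^r Z), then for every W in M_S(Z/p^r Z), the probability P(X[S] = W) converges to p^{−r S²} as N → ∞. -/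
open Filter Matrix

namespace Stmt7Aux

variable {S n : ℕ} {R K : Type*} [CommRing R] [Field K]

/-- The top `S` rows of a square matrix indexed by `Fin S ⊕ Fin n`. -/
def rowsOf (X : Matrix (Fin S ⊕ Fin n) (Fin S ⊕ Fin n) R) :
    Matrix (Fin S) (Fin S ⊕ Fin n) R := X.submatrix Sum.inl id

/-- The upper-left `S × S` corner of a wide matrix. -/
def cornerOf {β : Type*} (M : Matrix (Fin S) (Fin S ⊕ β) R) : Matrix (Fin S) (Fin S) R :=
  M.submatrix id Sum.inl

lemma rowsOf_mul (X Y : Matrix (Fin S ⊕ Fin n) (Fin S ⊕ Fin n) R) :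
    rowsOf (X * Y) = rowsOf X * Y := by
  ext i j; simp [rowsOf, Matrix.mul_apply]

/-- Full (row) rank predicate via left multiplication by row vectors. -/
def FullRank {β : Type*} [Fintype β] (M : Matrix (Fin S) β K) : Prop :=
  ∀ v : Fin S → K, v ᵥ* M = 0 → v = 0

/-- Any full-rank `S × (S+n)` matrix over a field is the top rows of an invertible matrix. -/
lemma exists_unit_rowsOf (M : Matrix (Fin S) (Fin S ⊕ Fin n) K) (h : FullRank M) :
    ∃ Y : (Matrix (Fin S ⊕ Fin n) (Fin S ⊕ Fin n) K)ˣ, rowsOf (↑Y : Matrix _ _ K) = M := by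
  classical
  set f : (Fin S → K) →ₗ[K] (Fin S ⊕ Fin n → K) := Mᵀ.mulVecLin with hfdef
  have hfapp : ∀ v, f v = v ᵥ* M := by
    intro v; simp [hfdef, Matrix.mulVec_transpose]
  have hinj : Function.Injective f := by
    rw [← LinearMap.ker_eq_bot, LinearMap.ker_eq_bot']
    intro v hv
    exact h v (by rw [← hfapp]; exact hv)
  obtain ⟨U', hc⟩ := Submodule.exists_isCompl (LinearMap.range f)
  have h1 : Module.finrank K (LinearMap.range f) = S := by
    rw [← (LinearEquiv.ofInjective f hinj).finrank_eq]
    simp [Module.finrank_pi]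
  have h2 : Module.finrank K (Fin S ⊕ Fin n → K) = S + n := by
    simp [Module.finrank_pi]
  have h3 : Module.finrank K U' = n := by
    have := Submodule.finrank_add_eq_of_isCompl hc
    omega
  obtain ⟨e2⟩ := FiniteDimensional.nonempty_linearEquiv_of_finrank_eq
    (show Module.finrank K (Fin n → K) = Module.finrank K U' by
      rw [h3]; simp [Module.finrank_pi])
  let E : ((Fin S → K) × (Fin n → K)) ≃ₗ[K] (Fin S ⊕ Fin n → K) :=
    ((LinearEquiv.ofInjective f hinj).prodCongr e2).trans
      (Submodule.prodEquivOfIsCompl _ U' hc)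
  let g : (Fin S ⊕ Fin n → K) ≃ₗ[K] (Fin S ⊕ Fin n → K) :=
    (LinearEquiv.sumArrowLequivProdArrow _ _ K K).trans E
  have hcomp1 : g.symm.toLinearMap.comp g.toLinearMap = LinearMap.id := by
    ext v : 1; simp
  have hcomp2 : g.toLinearMap.comp g.symm.toLinearMap = LinearMap.id := by
    ext v : 1; simp
  refine ⟨⟨(LinearMap.toMatrix' g.toLinearMap)ᵀ, (LinearMap.toMatrix' g.symm.toLinearMap)ᵀ,
      ?_, ?_⟩, ?_⟩
  · rw [← Matrix.transpose_mul, ← LinearMap.toMatrix'_comp, hcomp1, LinearMap.toMatrix'_id,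
      Matrix.transpose_one]
  · rw [← Matrix.transpose_mul, ← LinearMap.toMatrix'_comp, hcomp2, LinearMap.toMatrix'_id,
      Matrix.transpose_one]
  · ext i j
    have hsingle : (LinearEquiv.sumArrowLequivProdArrow (Fin S) (Fin n) K K)
        (Pi.single (Sum.inl i : Fin S ⊕ Fin n) (1:K)) = (Pi.single i 1, 0) := by
      refine Prod.ext (funext fun a => ?_) (funext fun b => ?_)
      · rw [LinearEquiv.sumArrowLequivProdArrow_apply_fst]
        simp [Pi.single_apply]
      · rw [LinearEquiv.sumArrowLequivProdArrow_apply_snd]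
        simp [Pi.single_apply]
    have : rowsOf ((LinearMap.toMatrix' g.toLinearMap)ᵀ) i j = M i j := by
      show (LinearMap.toMatrix' g.toLinearMap) j (Sum.inl i) = M i j
      rw [LinearMap.toMatrix'_apply]
      have hps : (fun j' => if j' = Sum.inl i then (1:K) else 0)
          = Pi.single (Sum.inl i : Fin S ⊕ Fin n) (1:K) := by
        funext x; rw [Pi.single_apply]
      show g (Pi.single (Sum.inl i) 1) j = M i j
      simp only [g, E, LinearEquiv.trans_apply, hsingle, LinearEquiv.prodCongr_apply, map_zero]
      rw [Submodule.coe_prodEquivOfIsCompl']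
      simp only [Submodule.coe_zero, add_zero, LinearEquiv.ofInjective_apply]
      rw [hfapp, Matrix.single_one_vecMul]
      rfl
    exact this

section Pi
variable (π : R →+* K)

/-- Full rank after applying `π` entrywise. -/
def Full {β : Type*} [Fintype β] (M : Matrix (Fin S) β R) : Prop :=
  ∀ v : Fin S → K, v ᵥ* M.map π = 0 → v = 0

lemma unimod_iff (hπs : Function.Surjective π) (hπu : ∀ x : R, IsUnit (π x) → IsUnit x)
    (M : Matrix (Fin S) (Fin S ⊕ Fin n) R) :
    (∃ X : (Matrix (Fin S ⊕ Fin n) (Fin S ⊕ Fin n) R)ˣ, rowsOf (↑X : Matrix _ _ R) = M)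
      ↔ Full π M := by
  constructor
  · rintro ⟨X, rfl⟩ v hv
    set Xb : Matrix (Fin S ⊕ Fin n) (Fin S ⊕ Fin n) K := (↑X : Matrix _ _ R).map π with hXb
    have hXbu : IsUnit Xb := by
      have : IsUnit (↑X : Matrix (Fin S ⊕ Fin n) (Fin S ⊕ Fin n) R) := Units.isUnit X
      exact this.map (RingHom.mapMatrix π)
    obtain ⟨u, hu⟩ := hXbu
    set w : Fin S ⊕ Fin n → K := Sum.elim v 0 with hw
    have hwX : w ᵥ* Xb = 0 := by
      funext j
      have heq : (w ᵥ* Xb) j = (v ᵥ* (rowsOf (↑X : Matrix _ _ R)).map π) j := by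
        simp only [Matrix.vecMul, dotProduct, hw]
        rw [Fintype.sum_sum_type]
        simp [rowsOf, Matrix.map_apply, hXb]
      rw [heq, hv]
    have hw0 : w = 0 := by
      have h1 : (w ᵥ* Xb) ᵥ* (↑u⁻¹ : Matrix (Fin S ⊕ Fin n) (Fin S ⊕ Fin n) K) = w := by
        rw [Matrix.vecMul_vecMul, ← hu, Units.mul_inv, Matrix.vecMul_one]
      rw [hwX, Matrix.zero_vecMul] at h1
      exact h1.symm
    funext i
    have := congrFun hw0 (Sum.inl i)
    simpa [hw] using this
  · intro h
    obtain ⟨Y, hY⟩ := exists_unit_rowsOf (M.map π) h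
    set s : K → R := Function.surjInv hπs with hs
    set X : Matrix (Fin S ⊕ Fin n) (Fin S ⊕ Fin n) R := fun i j =>
      match i with
      | Sum.inl i' => M i' j
      | Sum.inr _ => s ((↑Y : Matrix _ _ K) i j) with hX
    have hmap : X.map π = (↑Y : Matrix _ _ K) := by
      ext i j
      cases i with
      | inl i' =>
        have : (Y : Matrix (Fin S ⊕ Fin n) (Fin S ⊕ Fin n) K) (Sum.inl i') j = π (M i' j) := by
          have := congrFun (congrFun hY i') j
          simpa [rowsOf, Matrix.map_apply] using this
        simp [Matrix.map, hX, this]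
      | inr i' =>
        simp [Matrix.map, hX, hs, Function.surjInv_eq hπs]
    have hdet : IsUnit X.det := by
      apply hπu
      rw [RingHom.map_det, RingHom.mapMatrix_apply, hmap]
      exact (Matrix.isUnit_iff_isUnit_det _).mp (Units.isUnit Y)
    obtain ⟨u, hu⟩ := (Matrix.isUnit_iff_isUnit_det X).mpr hdet
    refine ⟨u, ?_⟩
    have : rowsOf ((↑u : Matrix (Fin S ⊕ Fin n) (Fin S ⊕ Fin n) R)) = rowsOf X := by rw [hu]
    rw [this]
    ext i j
    rfl

variable [Fintype R] [Fintype K] [DecidableEq R] [DecidableEq K]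

lemma card_zero_set_mul {G : Type*} [AddCommGroup G] [Fintype G] (φ : G →+ K)
    (hφ : Function.Surjective φ) :
    Nat.card {c : G // φ c = 0} * Fintype.card K = Fintype.card G := by
  classical
  have h1 : Nat.card G = Nat.card (G ⧸ φ.ker) * Nat.card φ.ker :=
    AddSubgroup.card_eq_card_quotient_mul_card_addSubgroup φ.ker
  have h2 : Nat.card (G ⧸ φ.ker) = Nat.card K :=
    Nat.card_congr (QuotientAddGroup.quotientKerEquivOfSurjective φ hφ).toEquiv
  have h3 : Nat.card {c : G // φ c = 0} = Nat.card φ.ker :=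
    Nat.card_congr (Equiv.subtypeEquivRight fun c => Iff.symm AddMonoidHom.mem_ker)
  rw [h3, ← Nat.card_eq_fintype_card, ← Nat.card_eq_fintype_card, h1, h2]
  ring

/-- The additive hom sending a column to `v ⬝ᵥ π ∘ c`. -/
def colHom (v : Fin S → K) : (Fin S → R) →+ K where
  toFun c := v ⬝ᵥ fun i => π (c i)
  map_zero' := by simp
  map_add' a b := by
    simp [dotProduct, mul_add, Finset.sum_add_distrib]

lemma colHom_surj (hπs : Function.Surjective π) {v : Fin S → K} (hv : v ≠ 0) :
    Function.Surjective (colHom π v) := by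
  obtain ⟨i, hi⟩ : ∃ i, v i ≠ 0 := by
    by_contra hc; push_neg at hc; exact hv (funext fun i => hc i)
  intro y
  obtain ⟨t, ht⟩ := hπs ((v i)⁻¹ * y)
  refine ⟨Pi.single i t, ?_⟩
  have : (colHom π v) (Pi.single i t)
      = v ⬝ᵥ (fun j => π ((Pi.single i t : Fin S → R) j)) := rfl
  rw [this, dotProduct, Finset.sum_eq_single i]
  · rw [Pi.single_eq_same, ht, ← mul_assoc, mul_inv_cancel₀ hi, one_mul]
  · intro b _ hb; rw [Pi.single_eq_of_ne hb, map_zero, mul_zero]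
  · intro h; exact absurd (Finset.mem_univ i) h

lemma card_colcond {β : Type*} [Fintype β] (v : Fin S → K)
    (hsurj : Function.Surjective (colHom π v)) (k : ℕ)
    (hk : k * Fintype.card K = Fintype.card R ^ S) :
    Nat.card {M : Matrix (Fin S) β R // ∀ j, colHom π v (fun i => M i j) = 0}
      = k ^ Fintype.card β := by
  classical
  have h1 : Nat.card {c : Fin S → R // colHom π v c = 0} * Fintype.card K
      = Fintype.card R ^ S := by
    rw [card_zero_set_mul (colHom π v) hsurj]
    simp [Fintype.card_fun]
  have hker : Nat.card {c : Fin S → R // colHom π v c = 0} = k :=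
    Nat.eq_of_mul_eq_mul_right Fintype.card_pos (by rw [h1, hk])
  have e : {M : Matrix (Fin S) β R // ∀ j, colHom π v (fun i => M i j) = 0}
      ≃ (β → {c : Fin S → R // colHom π v c = 0}) :=
    { toFun := fun M j => ⟨fun i => M.1 i j, M.2 j⟩
      invFun := fun g => ⟨Matrix.of (fun i j => (g j).1 i), fun j => (g j).2⟩
      left_inv := fun M => rfl
      right_inv := fun g => rfl }
  rw [Nat.card_congr e, Nat.card_fun, hker, Nat.card_eq_fintype_card]

lemma vecMul_map_iff {β : Type*} [Fintype β] (M : Matrix (Fin S) β R) (v : Fin S → K) :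
    v ᵥ* M.map π = 0 ↔ ∀ j, colHom π v (fun i => M i j) = 0 := by
  constructor
  · intro h j
    have := congrFun h j
    simpa [Matrix.vecMul, dotProduct, colHom, Matrix.map_apply] using this
  · intro h
    funext j
    have := h j
    simpa [Matrix.vecMul, dotProduct, colHom, Matrix.map_apply] using this

lemma card_bad_le {β : Type*} [Fintype β] (hπs : Function.Surjective π) (k : ℕ)
    (hk : k * Fintype.card K = Fintype.card R ^ S) :
    Nat.card {M : Matrix (Fin S) β R // ∃ v : Fin S → K, v ≠ 0 ∧ v ᵥ* M.map π = 0}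
      ≤ Fintype.card K ^ S * k ^ Fintype.card β := by
  classical
  rw [Nat.card_eq_fintype_card, Fintype.card_subtype]
  set vs : Finset (Fin S → K) := Finset.univ.filter (fun v => v ≠ 0) with hvs
  have hsub : (Finset.univ.filter
        (fun M : Matrix (Fin S) β R => ∃ v : Fin S → K, v ≠ 0 ∧ v ᵥ* M.map π = 0))
      ⊆ vs.biUnion (fun v => Finset.univ.filter
        (fun M : Matrix (Fin S) β R => ∀ j, colHom π v (fun i => M i j) = 0)) := by
    intro M hM
    simp only [Finset.mem_filter, Finset.mem_univ, true_and] at hM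
    obtain ⟨v, hv0, hv⟩ := hM
    refine Finset.mem_biUnion.mpr ⟨v, by simp [hvs, hv0], ?_⟩
    simp only [Finset.mem_filter, Finset.mem_univ, true_and]
    exact (vecMul_map_iff π M v).mp hv
  refine le_trans (Finset.card_le_card hsub) (le_trans Finset.card_biUnion_le ?_)
  have hbound : ∀ v ∈ vs, (Finset.univ.filter
      (fun M : Matrix (Fin S) β R => ∀ j, colHom π v (fun i => M i j) = 0)).card
        = k ^ Fintype.card β := by
    intro v hv
    have hv0 : v ≠ 0 := by simpa [hvs] using hv
    rw [← Fintype.card_subtype, ← Nat.card_eq_fintype_card]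
    exact card_colcond π v (colHom_surj π hπs hv0) k hk
  rw [Finset.sum_congr rfl hbound, Finset.sum_const, smul_eq_mul]
  have hvscard : vs.card ≤ Fintype.card K ^ S := by
    refine le_trans (Finset.card_filter_le _ _) ?_
    rw [Finset.card_univ]
    simp [Fintype.card_fun]
  exact Nat.mul_le_mul_right _ hvscard

lemma card_matrix_total {β : Type*} [Fintype β] [DecidableEq β] :
    Fintype.card (Matrix (Fin S) β R) = Fintype.card R ^ (S * Fintype.card β) := by
  have e : Matrix (Fin S) β R ≃ (Fin S → β → R) := Matrix.of.symm
  rw [Fintype.card_congr e, Fintype.card_fun, Fintype.card_fun, ← pow_mul, Fintype.card_fin,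
    Nat.mul_comm]

lemma card_full_bounds {β : Type*} [Fintype β] [DecidableEq β] (hπs : Function.Surjective π) (k : ℕ)
    (hk : k * Fintype.card K = Fintype.card R ^ S) :
    Nat.card {M : Matrix (Fin S) β R // Full π M} ≤ Fintype.card R ^ (S * Fintype.card β)
    ∧ Fintype.card R ^ (S * Fintype.card β)
        ≤ Nat.card {M : Matrix (Fin S) β R // Full π M}
          + Fintype.card K ^ S * k ^ Fintype.card β := by
  classical
  have htot := card_matrix_total (R := R) (β := β) (S := S)
  have hle : Fintype.card {M : Matrix (Fin S) β R // Full π M}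
      ≤ Fintype.card (Matrix (Fin S) β R) := Fintype.card_subtype_le _
  have hcompl : Fintype.card {M : Matrix (Fin S) β R // ¬ Full π M}
      = Fintype.card (Matrix (Fin S) β R)
        - Fintype.card {M : Matrix (Fin S) β R // Full π M} :=
    Fintype.card_subtype_compl _
  have hbad : Fintype.card {M : Matrix (Fin S) β R // ¬ Full π M}
      ≤ Fintype.card K ^ S * k ^ Fintype.card β := by
    have himp : ∀ M : Matrix (Fin S) β R, ¬ Full π M
        → ∃ v : Fin S → K, v ≠ 0 ∧ v ᵥ* M.map π = 0 := by
      intro M hM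
      by_contra hc
      push_neg at hc
      apply hM
      intro v hv
      by_contra hv0
      exact (hc v hv0) hv
    rw [← Nat.card_eq_fintype_card]
    refine le_trans ?_ (card_bad_le π hπs k hk)
    refine Nat.card_le_card_of_injective
      (fun M => ⟨M.1, himp M.1 M.2⟩) ?_
    intro a b h
    have h2 := congrArg Subtype.val h
    exact Subtype.ext h2
  rw [Nat.card_eq_fintype_card, ← htot]
  omega

lemma card_corner_split (Wc : Matrix (Fin S) (Fin S) R) :
    Nat.card {M : Matrix (Fin S) (Fin S ⊕ Fin n) R // Full π M ∧ cornerOf M = Wc}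
      = Nat.card {B : Matrix (Fin S) (Fin n) R // Full π (Matrix.fromCols Wc B)} := by
  have hM : ∀ M : Matrix (Fin S) (Fin S ⊕ Fin n) R,
      Matrix.fromCols (cornerOf M) (M.submatrix id Sum.inr) = M := by
    intro M; ext i j; cases j <;> simp [Matrix.fromCols, cornerOf]
  have e : ∀ M : {M : Matrix (Fin S) (Fin S ⊕ Fin n) R // Full π M ∧ cornerOf M = Wc},
      Matrix.fromCols Wc ((M.1).submatrix id Sum.inr) = M.1 := by
    rintro ⟨Mv, hF, hC⟩
    show Matrix.fromCols Wc (Mv.submatrix id Sum.inr) = Mv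
    rw [← hC]
    exact hM Mv
  apply Nat.card_congr
  refine
    { toFun := fun M => ⟨M.1.submatrix id Sum.inr, by rw [e M]; exact M.2.1⟩
      invFun := fun B => ⟨Matrix.fromCols Wc B.1, B.2, by
        ext i j; simp [cornerOf, Matrix.fromCols]⟩
      left_inv := fun M => Subtype.ext (e M)
      right_inv := fun B => Subtype.ext (by ext i j; simp [Matrix.fromCols]) }

lemma card_cornerfull_bounds (hπs : Function.Surjective π) (k : ℕ)
    (hk : k * Fintype.card K = Fintype.card R ^ S) (Wc : Matrix (Fin S) (Fin S) R) :
    Nat.card {B : Matrix (Fin S) (Fin n) R // Full π (Matrix.fromCols Wc B)}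
        ≤ Fintype.card R ^ (S * n)
    ∧ Fintype.card R ^ (S * n)
        ≤ Nat.card {B : Matrix (Fin S) (Fin n) R // Full π (Matrix.fromCols Wc B)}
          + Fintype.card K ^ S * k ^ n := by
  classical
  have htot : Fintype.card (Matrix (Fin S) (Fin n) R) = Fintype.card R ^ (S * n) := by
    rw [card_matrix_total, Fintype.card_fin]
  have hle : Fintype.card {B : Matrix (Fin S) (Fin n) R // Full π (Matrix.fromCols Wc B)}
      ≤ Fintype.card (Matrix (Fin S) (Fin n) R) := Fintype.card_subtype_le _
  have hcompl : Fintype.card {B : Matrix (Fin S) (Fin n) R // ¬ Full π (Matrix.fromCols Wc B)}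
      = Fintype.card (Matrix (Fin S) (Fin n) R)
        - Fintype.card {B : Matrix (Fin S) (Fin n) R // Full π (Matrix.fromCols Wc B)} :=
    Fintype.card_subtype_compl _
  have hbad : Fintype.card {B : Matrix (Fin S) (Fin n) R // ¬ Full π (Matrix.fromCols Wc B)}
      ≤ Fintype.card K ^ S * k ^ n := by
    have himp : ∀ B : Matrix (Fin S) (Fin n) R, ¬ Full π (Matrix.fromCols Wc B)
        → ∃ v : Fin S → K, v ≠ 0 ∧ v ᵥ* B.map π = 0 := by
      intro B hB
      have : ∃ v : Fin S → K, v ≠ 0 ∧ v ᵥ* (Matrix.fromCols Wc B).map π = 0 := by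
        by_contra hc
        push_neg at hc
        apply hB
        intro v hv
        by_contra hv0
        exact (hc v hv0) hv
      obtain ⟨v, hv0, hv⟩ := this
      refine ⟨v, hv0, ?_⟩
      funext j
      have := congrFun hv (Sum.inr j)
      simpa [Matrix.vecMul, dotProduct, Matrix.map_apply, Matrix.fromCols] using this
    rw [← Nat.card_eq_fintype_card]
    have step := card_bad_le (β := Fin n) π hπs k hk
    rw [Fintype.card_fin] at step
    refine le_trans ?_ step
    refine Nat.card_le_card_of_injective (fun B => ⟨B.1, himp B.1 B.2⟩) ?_
    intro a b h
    have h2 := congrArg Subtype.val h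
    exact Subtype.ext h2
  constructor
  · rw [Nat.card_eq_fintype_card, ← htot]
    exact Fintype.card_subtype_le _
  · rw [Nat.card_eq_fintype_card, ← htot]
    omega

end Pi

section Fibers
variable [Fintype R] [DecidableEq R]

lemma card_fiber_eq (M : Matrix (Fin S) (Fin S ⊕ Fin n) R)
    (h : ∃ g : (Matrix (Fin S ⊕ Fin n) (Fin S ⊕ Fin n) R)ˣ, rowsOf (↑g : Matrix _ _ R) = M) :
    Nat.card {X : (Matrix (Fin S ⊕ Fin n) (Fin S ⊕ Fin n) R)ˣ // rowsOf (↑X : Matrix _ _ R) = M}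
      = Nat.card {X : (Matrix (Fin S ⊕ Fin n) (Fin S ⊕ Fin n) R)ˣ //
          rowsOf (↑X : Matrix _ _ R) = rowsOf (1 : Matrix (Fin S ⊕ Fin n) (Fin S ⊕ Fin n) R)} := by
  obtain ⟨g, hg⟩ := h
  apply Nat.card_congr
  refine
    { toFun := fun X => ⟨X.1 * g⁻¹, by
        rw [Units.val_mul, rowsOf_mul, X.2, ← hg, ← rowsOf_mul, ← Units.val_mul]
        simp⟩
      invFun := fun Y => ⟨Y.1 * g, by
        rw [Units.val_mul, rowsOf_mul, Y.2, ← Units.val_one (α := Matrix (Fin S ⊕ Fin n) (Fin S ⊕ Fin n) R),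
          ← rowsOf_mul, ← Units.val_mul, one_mul, hg]⟩
      left_inv := fun X => Subtype.ext (by simp [mul_assoc])
      right_inv := fun Y => Subtype.ext (by simp [mul_assoc]) }

lemma card_event (P : Matrix (Fin S) (Fin S ⊕ Fin n) R → Prop) :
    Nat.card {X : (Matrix (Fin S ⊕ Fin n) (Fin S ⊕ Fin n) R)ˣ // P (rowsOf (↑X : Matrix _ _ R))}
      = Nat.card {X : (Matrix (Fin S ⊕ Fin n) (Fin S ⊕ Fin n) R)ˣ //
            rowsOf (↑X : Matrix _ _ R) = rowsOf (1 : Matrix (Fin S ⊕ Fin n) (Fin S ⊕ Fin n) R)}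
        * Nat.card {M : Matrix (Fin S) (Fin S ⊕ Fin n) R //
            P M ∧ ∃ g : (Matrix (Fin S ⊕ Fin n) (Fin S ⊕ Fin n) R)ˣ, rowsOf (↑g : Matrix _ _ R) = M} := by
  classical
  set s : Finset (Matrix (Fin S ⊕ Fin n) (Fin S ⊕ Fin n) R)ˣ :=
    Finset.univ.filter (fun X => P (rowsOf (↑X : Matrix _ _ R))) with hs
  set t : Finset (Matrix (Fin S) (Fin S ⊕ Fin n) R) :=
    Finset.univ.filter (fun M => P M ∧ ∃ g : (Matrix (Fin S ⊕ Fin n) (Fin S ⊕ Fin n) R)ˣ,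
      rowsOf (↑g : Matrix _ _ R) = M) with ht
  have hmaps : ∀ X ∈ s, rowsOf (↑X : Matrix _ _ R) ∈ t := by
    intro X hX
    simp only [hs, Finset.mem_filter, Finset.mem_univ, true_and] at hX
    simp only [ht, Finset.mem_filter, Finset.mem_univ, true_and]
    exact ⟨hX, ⟨X, rfl⟩⟩
  have key := Finset.card_eq_sum_card_fiberwise hmaps
  have hfib : ∀ M ∈ t, (s.filter (fun X : (Matrix (Fin S ⊕ Fin n) (Fin S ⊕ Fin n) R)ˣ =>
      rowsOf (↑X : Matrix _ _ R) = M)).card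
      = Nat.card {X : (Matrix (Fin S ⊕ Fin n) (Fin S ⊕ Fin n) R)ˣ //
          rowsOf (↑X : Matrix _ _ R) = rowsOf (1 : Matrix (Fin S ⊕ Fin n) (Fin S ⊕ Fin n) R)} := by
    intro M hM
    simp only [ht, Finset.mem_filter, Finset.mem_univ, true_and] at hM
    have hflt : s.filter (fun X : (Matrix (Fin S ⊕ Fin n) (Fin S ⊕ Fin n) R)ˣ =>
          rowsOf (↑X : Matrix _ _ R) = M)
        = Finset.univ.filter (fun X : (Matrix (Fin S ⊕ Fin n) (Fin S ⊕ Fin n) R)ˣ =>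
          rowsOf (↑X : Matrix _ _ R) = M) := by
      apply Finset.Subset.antisymm
      · intro X hX
        rw [Finset.mem_filter] at hX ⊢
        exact ⟨Finset.mem_univ _, hX.2⟩
      · intro X hX
        rw [Finset.mem_filter] at hX
        rw [Finset.mem_filter, hs, Finset.mem_filter]
        exact ⟨⟨Finset.mem_univ _, by rw [hX.2]; exact hM.1⟩, hX.2⟩
    have hcs : Fintype.card {X : (Matrix (Fin S ⊕ Fin n) (Fin S ⊕ Fin n) R)ˣ //
          rowsOf (↑X : Matrix _ _ R) = M}
        = (Finset.univ.filter (fun X : (Matrix (Fin S ⊕ Fin n) (Fin S ⊕ Fin n) R)ˣ =>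
            rowsOf (↑X : Matrix _ _ R) = M)).card :=
      Fintype.card_of_subtype _ (fun x => by simp)
    rw [hflt, ← hcs, ← Nat.card_eq_fintype_card]
    exact card_fiber_eq M hM.2
  rw [Finset.sum_congr rfl hfib, Finset.sum_const, smul_eq_mul] at key
  have h1 : Nat.card {X : (Matrix (Fin S ⊕ Fin n) (Fin S ⊕ Fin n) R)ˣ //
      P (rowsOf (↑X : Matrix _ _ R))} = s.card := by
    rw [Nat.card_eq_fintype_card]
    exact Fintype.card_of_subtype s (by intro x; simp [hs])
  have h2 : Nat.card {M : Matrix (Fin S) (Fin S ⊕ Fin n) R //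
      P M ∧ ∃ g : (Matrix (Fin S ⊕ Fin n) (Fin S ⊕ Fin n) R)ˣ, rowsOf (↑g : Matrix _ _ R) = M}
        = t.card := by
    rw [Nat.card_eq_fintype_card]
    exact Fintype.card_of_subtype t (by intro x; simp [ht])
  rw [h1, h2, key, Nat.mul_comm]

end Fibers

section Ratio
variable (π : R →+* K) [Fintype R] [Fintype K] [DecidableEq R] [DecidableEq K]

lemma ratio_eq (hπs : Function.Surjective π) (hπu : ∀ x : R, IsUnit (π x) → IsUnit x)
    (Wc : Matrix (Fin S) (Fin S) R) :
    ∃ c : ℕ, 0 < c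
    ∧ Nat.card {X : (Matrix (Fin S ⊕ Fin n) (Fin S ⊕ Fin n) R)ˣ //
          cornerOf (rowsOf (↑X : Matrix (Fin S ⊕ Fin n) (Fin S ⊕ Fin n) R)) = Wc}
        = c * Nat.card {B : Matrix (Fin S) (Fin n) R // Full π (Matrix.fromCols Wc B)}
    ∧ Nat.card (Matrix (Fin S ⊕ Fin n) (Fin S ⊕ Fin n) R)ˣ
        = c * Nat.card {M : Matrix (Fin S) (Fin S ⊕ Fin n) R // Full π M} := by
  classical
  refine ⟨Nat.card {X : (Matrix (Fin S ⊕ Fin n) (Fin S ⊕ Fin n) R)ˣ //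
      rowsOf (↑X : Matrix (Fin S ⊕ Fin n) (Fin S ⊕ Fin n) R) = rowsOf (1 : Matrix (Fin S ⊕ Fin n) (Fin S ⊕ Fin n) R)},
      ?_, ?_, ?_⟩
  · have : Nonempty {X : (Matrix (Fin S ⊕ Fin n) (Fin S ⊕ Fin n) R)ˣ //
        rowsOf (↑X : Matrix (Fin S ⊕ Fin n) (Fin S ⊕ Fin n) R) = rowsOf (1 : Matrix (Fin S ⊕ Fin n) (Fin S ⊕ Fin n) R)} :=
      ⟨⟨1, by rw [Units.val_one]⟩⟩
    exact Nat.card_pos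
  · rw [card_event (P := fun M => cornerOf M = Wc), ← card_corner_split π Wc]
    congr 1
    apply Nat.card_congr
    apply Equiv.subtypeEquivRight
    intro M
    constructor
    · rintro ⟨h1, h2⟩
      exact ⟨(unimod_iff π hπs hπu M).mp h2, h1⟩
    · rintro ⟨h1, h2⟩
      exact ⟨h2, (unimod_iff π hπs hπu M).mpr h1⟩
  · have h0 : Nat.card (Matrix (Fin S ⊕ Fin n) (Fin S ⊕ Fin n) R)ˣ
        = Nat.card {X : (Matrix (Fin S ⊕ Fin n) (Fin S ⊕ Fin n) R)ˣ //
            (fun _ => True) (rowsOf (↑X : Matrix (Fin S ⊕ Fin n) (Fin S ⊕ Fin n) R))} :=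
      Nat.card_congr (Equiv.subtypeUnivEquiv (fun _ => trivial)).symm
    rw [h0, card_event (P := fun _ => True)]
    congr 1
    apply Nat.card_congr
    apply Equiv.subtypeEquivRight
    intro M
    constructor
    · rintro ⟨-, h2⟩
      exact (unimod_iff π hπs hπu M).mp h2
    · intro h1
      exact ⟨trivial, (unimod_iff π hπs hπu M).mpr h1⟩

end Ratio

end Stmt7Aux


open Filter

open Stmt7Aux in
theorem stmt_7 (p : ℕ) (hp : p.Prime) (r : ℕ) (hr : 1 ≤ r) (S : ℕ) (hS : 1 ≤ S)
    (W : Matrix (Fin S) (Fin S) (ZMod (p ^ r))) :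
    Tendsto (fun n : ℕ =>
        (Nat.card {X : GL (Fin (S + n)) (ZMod (p ^ r)) //
            (fun i j : Fin S => (X : Matrix (Fin (S + n)) (Fin (S + n)) (ZMod (p ^ r)))
              (Fin.castLE (Nat.le_add_right S n) i)
              (Fin.castLE (Nat.le_add_right S n) j)) = W} : ℝ) /
          (Nat.card (GL (Fin (S + n)) (ZMod (p ^ r))) : ℝ))
      atTop (nhds (((p : ℝ) ^ (r * S ^ 2))⁻¹)) := by
  classical
  haveI : Fact p.Prime := ⟨hp⟩
  have hr0 : r ≠ 0 := by omega
  haveI : NeZero (p ^ r) := ⟨pow_ne_zero r hp.pos.ne'⟩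
  set π : ZMod (p ^ r) →+* ZMod p := ZMod.castHom (dvd_pow_self p hr0) (ZMod p) with hπ
  have hπs : Function.Surjective π := by
    intro x
    refine ⟨((x.val : ℕ) : ZMod (p ^ r)), ?_⟩
    rw [map_natCast]
    exact ZMod.natCast_rightInverse x
  have hπu : ∀ x : ZMod (p ^ r), IsUnit (π x) → IsUnit x := by
    intro x hx
    have hxv : ((x.val : ℕ) : ZMod (p ^ r)) = x := ZMod.natCast_rightInverse x
    rw [← hxv, map_natCast] at hx
    rw [ZMod.isUnit_iff_coprime] at hx
    rw [← hxv, ZMod.isUnit_iff_coprime]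
    exact hx.pow_right r
  have hrs : 1 ≤ r * S := Nat.one_le_iff_ne_zero.mpr (Nat.mul_ne_zero (by omega) (by omega))
  set k : ℕ := p ^ (r * S - 1) with hkdef
  have hk : k * Fintype.card (ZMod p) = Fintype.card (ZMod (p ^ r)) ^ S := by
    rw [ZMod.card, ZMod.card, hkdef, ← pow_succ, ← pow_mul]
    congr 1
    omega
  set A : ℕ → ℕ := fun n => Nat.card {B : Matrix (Fin S) (Fin n) (ZMod (p ^ r)) //
      Full π (Matrix.fromCols W B)} with hA
  set T : ℕ → ℕ := fun n => Nat.card {M : Matrix (Fin S) (Fin S ⊕ Fin n) (ZMod (p ^ r)) //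
      Full π M} with hT
  -- pointwise identification of the probability with `A n / T n`
  have key : ∀ n : ℕ,
      (Nat.card {X : GL (Fin (S + n)) (ZMod (p ^ r)) //
          (fun i j : Fin S => (X : Matrix (Fin (S + n)) (Fin (S + n)) (ZMod (p ^ r)))
            (Fin.castLE (Nat.le_add_right S n) i)
            (Fin.castLE (Nat.le_add_right S n) j)) = W} : ℝ)
        / (Nat.card (GL (Fin (S + n)) (ZMod (p ^ r))) : ℝ)
      = (A n : ℝ) / (T n : ℝ) := by
    intro n
    obtain ⟨c, hc, h1, h2⟩ := ratio_eq (n := n) π hπs hπu W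
    set em : Matrix (Fin S ⊕ Fin n) (Fin S ⊕ Fin n) (ZMod (p ^ r))
        ≃* Matrix (Fin (S + n)) (Fin (S + n)) (ZMod (p ^ r)) :=
      (Matrix.reindexAlgEquiv (ZMod (p ^ r)) (ZMod (p ^ r)) (finSumFinEquiv (m := S) (n := n))).toRingEquiv.toMulEquiv
      with hem
    set ue := Units.mapEquiv em with hue
    have hsymm : ∀ i : Fin S,
        finSumFinEquiv.symm (Fin.castLE (Nat.le_add_right S n) i) = Sum.inl i := by
      intro i
      rw [Equiv.symm_apply_eq, finSumFinEquiv_apply_left]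
      rfl
    have hcc : ∀ X : (Matrix (Fin S ⊕ Fin n) (Fin S ⊕ Fin n) (ZMod (p ^ r)))ˣ,
        (fun i j : Fin S => (↑(ue X) : Matrix (Fin (S + n)) (Fin (S + n)) (ZMod (p ^ r)))
            (Fin.castLE (Nat.le_add_right S n) i) (Fin.castLE (Nat.le_add_right S n) j))
          = cornerOf (rowsOf (↑X : Matrix (Fin S ⊕ Fin n) (Fin S ⊕ Fin n) (ZMod (p ^ r)))) := by
      intro X
      funext i j
      rw [hue, Units.coe_mapEquiv, hem]
      show (Matrix.reindexAlgEquiv (ZMod (p ^ r)) (ZMod (p ^ r)) finSumFinEquiv)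
        (↑X : Matrix (Fin S ⊕ Fin n) (Fin S ⊕ Fin n) (ZMod (p ^ r))) _ _ = _
      rw [Matrix.reindexAlgEquiv_apply, Matrix.reindex_apply, Matrix.submatrix_apply,
        hsymm i, hsymm j]
      rfl
    have hevE : {X : (Matrix (Fin S ⊕ Fin n) (Fin S ⊕ Fin n) (ZMod (p ^ r)))ˣ //
          cornerOf (rowsOf (↑X : Matrix (Fin S ⊕ Fin n) (Fin S ⊕ Fin n) (ZMod (p ^ r)))) = W}
        ≃ {X : GL (Fin (S + n)) (ZMod (p ^ r)) //
            (fun i j : Fin S => (X : Matrix (Fin (S + n)) (Fin (S + n)) (ZMod (p ^ r)))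
              (Fin.castLE (Nat.le_add_right S n) i)
              (Fin.castLE (Nat.le_add_right S n) j)) = W} := by
      refine Equiv.subtypeEquiv ue.toEquiv ?_
      intro X
      rw [show (ue.toEquiv X) = ue X from rfl, ← hcc X]
      exact Iff.rfl
    have hev : Nat.card {X : GL (Fin (S + n)) (ZMod (p ^ r)) //
          (fun i j : Fin S => (X : Matrix (Fin (S + n)) (Fin (S + n)) (ZMod (p ^ r)))
            (Fin.castLE (Nat.le_add_right S n) i)
            (Fin.castLE (Nat.le_add_right S n) j)) = W}
        = Nat.card {X : (Matrix (Fin S ⊕ Fin n) (Fin S ⊕ Fin n) (ZMod (p ^ r)))ˣ //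
            cornerOf (rowsOf (↑X : Matrix (Fin S ⊕ Fin n) (Fin S ⊕ Fin n) (ZMod (p ^ r)))) = W} :=
      Nat.card_congr hevE.symm
    have hgl : Nat.card (GL (Fin (S + n)) (ZMod (p ^ r)))
        = Nat.card (Matrix (Fin S ⊕ Fin n) (Fin S ⊕ Fin n) (ZMod (p ^ r)))ˣ :=
      Nat.card_congr ue.toEquiv.symm
    rw [hev, hgl, h1, h2]
    push_cast
    rw [mul_div_mul_left _ _ (show (c:ℝ) ≠ 0 by exact_mod_cast hc.ne')]
  -- counting bounds
  have hA1 : ∀ n, A n ≤ p ^ (r * S * n) := by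
    intro n
    have h := (card_cornerfull_bounds (n := n) π hπs k hk W).1
    rw [ZMod.card] at h
    calc A n ≤ (p ^ r) ^ (S * n) := h
      _ = p ^ (r * S * n) := by rw [← pow_mul, mul_assoc]
  have hA2 : ∀ n, p ^ (r * S * n) ≤ A n + p ^ (S + (r * S - 1) * n) := by
    intro n
    have h := (card_cornerfull_bounds (n := n) π hπs k hk W).2
    rw [ZMod.card, ZMod.card, hkdef] at h
    calc p ^ (r * S * n) = (p ^ r) ^ (S * n) := by rw [← pow_mul, mul_assoc]
      _ ≤ A n + p ^ S * (p ^ (r * S - 1)) ^ n := h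
      _ = A n + p ^ (S + (r * S - 1) * n) := by rw [← pow_mul, ← pow_add]
  have hcardsum : ∀ n : ℕ, Fintype.card (Fin S ⊕ Fin n) = S + n := by
    intro n; simp
  have hT1 : ∀ n, T n ≤ p ^ (r * S * (S + n)) := by
    intro n
    have h := (card_full_bounds (β := Fin S ⊕ Fin n) π hπs k hk).1
    rw [ZMod.card, hcardsum n] at h
    calc T n ≤ (p ^ r) ^ (S * (S + n)) := h
      _ = p ^ (r * S * (S + n)) := by rw [← pow_mul, mul_assoc]
  have hT2 : ∀ n, p ^ (r * S * (S + n)) ≤ T n + p ^ (S + (r * S - 1) * (S + n)) := by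
    intro n
    have h := (card_full_bounds (β := Fin S ⊕ Fin n) π hπs k hk).2
    rw [ZMod.card, ZMod.card, hkdef, hcardsum n] at h
    calc p ^ (r * S * (S + n)) = (p ^ r) ^ (S * (S + n)) := by rw [← pow_mul, mul_assoc]
      _ ≤ T n + p ^ S * (p ^ (r * S - 1)) ^ (S + n) := h
      _ = T n + p ^ (S + (r * S - 1) * (S + n)) := by rw [← pow_mul, ← pow_add]
  have hexp : ∀ n, 1 ≤ n → S + (r * S - 1) * (S + n) < r * S * (S + n) := by
    intro n hn
    have h1 : r * S * (S + n) = (r * S - 1) * (S + n) + (S + n) := by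
      calc r * S * (S + n) = ((r * S - 1) + 1) * (S + n) := by rw [Nat.sub_add_cancel hrs]
        _ = (r * S - 1) * (S + n) + (S + n) := by ring
    omega
  have hTpos : ∀ n, 1 ≤ n → 0 < T n := by
    intro n hn
    have h := hT2 n
    have hplt : p ^ (S + (r * S - 1) * (S + n)) < p ^ (r * S * (S + n)) :=
      Nat.pow_lt_pow_right hp.one_lt (hexp n hn)
    omega
  -- real analysis
  have hP1 : (1 : ℝ) < p := by exact_mod_cast hp.one_lt
  have hP0 : (0 : ℝ) < p := lt_trans one_pos hP1
  set C : ℝ := ((p : ℝ) ^ (r * S ^ 2))⁻¹ with hC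
  have hb1 : ∀ m : ℕ, (p : ℝ) ^ (r * S * (S + m)) = (p : ℝ) ^ (r * S ^ 2) * (p : ℝ) ^ (r * S * m) := by
    intro m; rw [← pow_add]; congr 1; ring
  have hinv : Tendsto (fun n : ℕ => ((p : ℝ)⁻¹) ^ n) atTop (nhds 0) := by
    apply tendsto_pow_atTop_nhds_zero_of_lt_one (by positivity)
    rw [inv_lt_one₀ hP0]
    exact hP1
  set low : ℕ → ℝ := fun n => (1 - (p : ℝ) ^ S * ((p : ℝ)⁻¹) ^ n) * C with hlowdef
  set upq : ℕ → ℝ := fun n => C * (1 - ((p : ℝ)⁻¹) ^ n)⁻¹ with hupdef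
  have hlowT : Tendsto low atTop (nhds C) := by
    have h' : Tendsto (fun n : ℕ => (1 - (p : ℝ) ^ S * ((p : ℝ)⁻¹) ^ n) * C) atTop
        (nhds ((1 - (p : ℝ) ^ S * 0) * C)) :=
      ((hinv.const_mul _).const_sub 1).mul_const C
    rw [show ((1:ℝ) - (p : ℝ) ^ S * 0) * C = C by ring] at h'
    exact h'
  have hupT : Tendsto upq atTop (nhds C) := by
    have h' : Tendsto (fun n : ℕ => C * (1 - ((p : ℝ)⁻¹) ^ n)⁻¹) atTop
        (nhds (C * (1 - (0:ℝ))⁻¹)) :=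
      ((hinv.const_sub 1).inv₀ (by norm_num)).const_mul C
    rw [show C * ((1:ℝ) - 0)⁻¹ = C by norm_num] at h'
    exact h'
  -- the squeeze
  have hmain : Tendsto (fun n : ℕ => (A n : ℝ) / (T n : ℝ)) atTop (nhds C) := by
    apply tendsto_of_tendsto_of_tendsto_of_le_of_le' hlowT hupT
    · filter_upwards [eventually_ge_atTop 1] with n hn
      -- low n ≤ A n / T n
      have hTpos' : (0 : ℝ) < (T n : ℝ) := by exact_mod_cast hTpos n hn
      have hTle : (T n : ℝ) ≤ (p : ℝ) ^ (r * S * (S + n)) := by exact_mod_cast hT1 n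
      have hAge : (p : ℝ) ^ (r * S * n) - (p : ℝ) ^ (S + (r * S - 1) * n) ≤ (A n : ℝ) := by
        have := hA2 n
        have h' : ((p : ℝ) ^ (r * S * n)) ≤ (A n : ℝ) + (p : ℝ) ^ (S + (r * S - 1) * n) := by
          exact_mod_cast this
        linarith
      have step : ((p : ℝ) ^ (r * S * n) - (p : ℝ) ^ (S + (r * S - 1) * n))
            / (p : ℝ) ^ (r * S * (S + n)) ≤ (A n : ℝ) / (T n : ℝ) :=
        div_le_div₀ (by positivity) hAge hTpos' hTle
      refine le_trans (le_of_eq ?_) step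
      -- identity: low n equals that quotient
      have ha : (0:ℝ) < (p : ℝ) ^ (r * S * n) := by positivity
      have hz : (0:ℝ) < (p : ℝ) ^ (r * S ^ 2) := by positivity
      have hy : (0:ℝ) < (p : ℝ) ^ n := by positivity
      have hid : (p : ℝ) ^ (S + (r * S - 1) * n) * (p : ℝ) ^ n
          = (p : ℝ) ^ S * (p : ℝ) ^ (r * S * n) := by
        rw [← pow_add, ← pow_add]
        congr 1
        have h2 : (r * S - 1) * n + n = r * S * n := by
          calc (r * S - 1) * n + n = ((r * S - 1) + 1) * n := by ring
            _ = r * S * n := by rw [Nat.sub_add_cancel hrs]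
        omega
      have hbad : (p : ℝ) ^ (S + (r * S - 1) * n)
          = (p : ℝ) ^ S * (p : ℝ) ^ (r * S * n) * ((p : ℝ) ^ n)⁻¹ := by
        rw [← div_eq_mul_inv, eq_div_iff hy.ne']
        exact hid
      rw [hlowdef]
      simp only []
      rw [hb1 n, hbad, hC, inv_pow]
      rw [show (p : ℝ) ^ (r * S * n) - (p : ℝ) ^ S * (p : ℝ) ^ (r * S * n) * ((p : ℝ) ^ n)⁻¹
          = (1 - (p : ℝ) ^ S * ((p : ℝ) ^ n)⁻¹) * (p : ℝ) ^ (r * S * n) by ring]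
      rw [mul_div_assoc, mul_comm ((p : ℝ) ^ (r * S ^ 2)) ((p : ℝ) ^ (r * S * n)), ← div_div,
        div_self ha.ne', one_div]
    · filter_upwards [eventually_ge_atTop 1] with n hn
      -- A n / T n ≤ upq n
      have hTpos' : (0 : ℝ) < (T n : ℝ) := by exact_mod_cast hTpos n hn
      have hAle : (A n : ℝ) ≤ (p : ℝ) ^ (r * S * n) := by exact_mod_cast hA1 n
      have hid : (p : ℝ) ^ (S + (r * S - 1) * (S + n)) * (p : ℝ) ^ n
          = (p : ℝ) ^ (r * S * (S + n)) := by
        rw [← pow_add]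
        congr 1
        have h2 : (r * S - 1) * (S + n) + (S + n) = r * S * (S + n) := by
          calc (r * S - 1) * (S + n) + (S + n) = ((r * S - 1) + 1) * (S + n) := by ring
            _ = r * S * (S + n) := by rw [Nat.sub_add_cancel hrs]
        omega
      have hy : (0:ℝ) < (p : ℝ) ^ n := by positivity
      have hbad : (p : ℝ) ^ (S + (r * S - 1) * (S + n))
          = (p : ℝ) ^ (r * S * (S + n)) * ((p : ℝ) ^ n)⁻¹ := by
        rw [← div_eq_mul_inv, eq_div_iff hy.ne']
        exact hid
      have hyn : (1:ℝ) < (p : ℝ) ^ n := by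
        exact_mod_cast Nat.one_lt_pow (by omega) hp.one_lt
      have heps : ((p : ℝ)⁻¹) ^ n < 1 := by
        rw [inv_pow, inv_lt_one₀ (by positivity)]
        exact hyn
      have hD : (0:ℝ) < (p : ℝ) ^ (r * S * (S + n)) - (p : ℝ) ^ (S + (r * S - 1) * (S + n)) := by
        have hlt : (p:ℝ) ^ (S + (r*S-1)*(S+n)) < (p:ℝ) ^ (r*S*(S+n)) := by
          exact_mod_cast Nat.pow_lt_pow_right hp.one_lt (hexp n hn)
        linarith
      have hTge : (p : ℝ) ^ (r * S * (S + n)) - (p : ℝ) ^ (S + (r * S - 1) * (S + n))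
          ≤ (T n : ℝ) := by
        have := hT2 n
        have h' : ((p : ℝ) ^ (r * S * (S + n))) ≤ (T n : ℝ) + (p : ℝ) ^ (S + (r * S - 1) * (S + n)) := by
          exact_mod_cast this
        linarith
      have step : (A n : ℝ) / (T n : ℝ)
          ≤ (p : ℝ) ^ (r * S * n)
            / ((p : ℝ) ^ (r * S * (S + n)) - (p : ℝ) ^ (S + (r * S - 1) * (S + n))) :=
        div_le_div₀ (by positivity) hAle hD hTge
      refine le_trans step (le_of_eq ?_)
      have ha : (0:ℝ) < (p : ℝ) ^ (r * S * n) := by positivity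
      have hz : (0:ℝ) < (p : ℝ) ^ (r * S ^ 2) := by positivity
      have h1eps : (0:ℝ) < 1 - ((p : ℝ) ^ n)⁻¹ := by
        rw [← inv_pow]
        linarith
      rw [hupdef]
      simp only []
      rw [hbad, hb1 n, hC, inv_pow]
      rw [show (p : ℝ) ^ (r * S ^ 2) * (p : ℝ) ^ (r * S * n)
          - (p : ℝ) ^ (r * S ^ 2) * (p : ℝ) ^ (r * S * n) * ((p : ℝ) ^ n)⁻¹
          = ((p : ℝ) ^ (r * S ^ 2) * (1 - ((p : ℝ) ^ n)⁻¹)) * (p : ℝ) ^ (r * S * n) by ring]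
      rw [mul_comm ((p : ℝ) ^ (r * S ^ 2) * (1 - ((p : ℝ) ^ n)⁻¹)) ((p : ℝ) ^ (r * S * n)),
        ← div_div, div_self ha.ne', one_div, mul_inv]
  exact Tendsto.congr (fun n => (key n).symm) hmain
end
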